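/- Let π be a play in the expanded game G' from (s_init, 0) with MPsup(π) ≤ t. Then there exists a configuration γ ∈ Γ^{≤t} such that for every n ∈ ℕ there exist infinitely many n' ≥ n with density({γ}, π_{[n,n']}) ≥ t̃ / (4(t + 1)² |S|), where π_{[n,n']} denotes the infix of π consisting of its edges at positions n+1 through n'. -/

import Mathlib

namespace AvgEnergy

/-- An integer-weighted edge over a state space `α`. -/
abbrev WEdge (α : Type*) : Type _ := α × ℤ × α

/-- A finite turn-based weighted game `G = (S₀, S₁, E)`:
`S₀` and `S₁` are disjoint sets of states covering `S`, edges carry integer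
weights bounded in absolute value by `W`, and every state has an outgoing edge. -/
structure Game (S : Type*) where
  S0 : Set S
  S1 : Set S
  E : Set (WEdge S)
  W : ℕ
  disj : Disjoint S0 S1
  cover : S0 ∪ S1 = Set.univ
  wbound : ∀ e ∈ E, -(W : ℤ) ≤ e.2.1 ∧ e.2.1 ≤ (W : ℤ)
  total : ∀ s : S, ∃ w s', (s, w, s') ∈ E

variable {α : Type*}

/-- A play from `s`: an infinite sequence of consecutive edges of `E` starting at `s`. -/
def IsPlay (E : Set (WEdge α)) (s : α) (π : ℕ → WEdge α) : Prop :=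
  (∀ i, π i ∈ E) ∧ (π 0).1 = s ∧ ∀ i, (π i).2.2 = (π (i + 1)).1

/-- Energy level of the length-`n` prefix of `π`. -/
def EL (π : ℕ → WEdge α) (n : ℕ) : ℤ :=
  ∑ i ∈ Finset.range n, (π i).2.1

/-- Mean-payoff of the length-`n` prefix of `π`. -/
def MP (π : ℕ → WEdge α) (n : ℕ) : ℚ := (EL π n : ℚ) / n

/-- Average-energy of the length-`n` prefix of `π`. -/
def AE (π : ℕ → WEdge α) (n : ℕ) : ℚ :=
  (∑ i ∈ Finset.range n, (EL π (i + 1) : ℚ)) / n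

/-- `limsup_{n → ∞} f n ≤ t` (ε-characterization, valid in `ℚ`). -/
def LimsupLE (f : ℕ → ℚ) (t : ℚ) : Prop :=
  ∀ ε : ℚ, 0 < ε → ∃ N, ∀ n ≥ N, f n ≤ t + ε

/-- The state reached after following the finite prefix `ρ` from `s`. -/
def EndSt (s : α) (ρ : List (WEdge α)) : α :=
  (ρ.getLast?.map (fun e => e.2.2)).getD s

/-- `ρ` is a finite play prefix from `s` in the graph with edge set `E`. -/
def IsPrefixFrom (E : Set (WEdge α)) (s : α) (ρ : List (WEdge α)) : Prop :=
  (∀ e ∈ ρ, e ∈ E) ∧ List.Chain' (fun e f => e.2.2 = f.1) ρ ∧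
    ∀ e, ρ.head? = some e → e.1 = s

/-- A strategy (of the player owning the states in `S0`) from `s`: it assigns to every
play prefix from `s` ending in a state of `S0` a valid outgoing edge. -/
def IsStrategy (E : Set (WEdge α)) (S0 : Set α) (s : α)
    (σ : List (WEdge α) → WEdge α) : Prop :=
  ∀ ρ, IsPrefixFrom E s ρ → EndSt s ρ ∈ S0 → σ ρ ∈ E ∧ (σ ρ).1 = EndSt s ρ

/-- The length-`n` prefix of a play, as a list of edges. -/
def Pref (π : ℕ → WEdge α) (n : ℕ) : List (WEdge α) :=
  List.ofFn (fun i : Fin n => π i)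

/-- `π` is an outcome of the strategy `σ` (for the player owning `S0`) from `s`. -/
def IsOutcome (E : Set (WEdge α)) (S0 : Set α) (s : α)
    (σ : List (WEdge α) → WEdge α) (π : ℕ → WEdge α) : Prop :=
  IsPlay E s π ∧ ∀ n, EndSt s (Pref π n) ∈ S0 → π n = σ (Pref π n)

/-- Configurations of the expanded game: `⊥` is `none`. -/
abbrev Conf (S : Type*) := Option (S × ℕ)

/-- Edges of the expanded infinite-state weighted game `G'`:
`((s,c), c', (s',c'))` whenever `(s,w,s') ∈ E` and `c' = c + w ≥ 0`;
`((s,c), ⌈t⌉+1, ⊥)` whenever some `(s,w,s') ∈ E` has `c + w < 0`; and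
`(⊥, ⌈t⌉+1, ⊥)`. -/
def ExpE {S : Type*} (G : Game S) (t : ℚ) : Set (WEdge (Conf S)) :=
  {e | (∃ (s : S) (c : ℕ) (w : ℤ) (s' : S) (c' : ℕ), (s, w, s') ∈ G.E ∧ (c : ℤ) + w = (c' : ℤ) ∧
          e = (some (s, c), (c' : ℤ), some (s', c'))) ∨
       (∃ (s : S) (c : ℕ) (w : ℤ) (s' : S), (s, w, s') ∈ G.E ∧ (c : ℤ) + w < 0 ∧
          e = (some (s, c), ⌈t⌉ + 1, (none : Conf S))) ∨
       e = ((none : Conf S), ⌈t⌉ + 1, (none : Conf S))}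

/-- The configurations of the expanded game belonging to player `P₀`. -/
def ExpS0 {S : Type*} (G : Game S) : Set (Conf S) :=
  {γ | ∃ s c, s ∈ G.S0 ∧ γ = some (s, c)}

/-- The state (configuration) visited at position `n` along a play from `s`:
`γ₀ = s` and `γ_{n+1}` is the target of the `(n+1)`-st edge. -/
def StAt (s : α) (π : ℕ → WEdge α) : ℕ → α
  | 0 => s
  | n + 1 => (π n).2.2

end AvgEnergy

namespace AvgEnergy

/-- The set `Γ^{≤t}` of configurations whose counter value is at most `t`. -/
def ConfLE {S : Type*} (t : ℚ) : Set (Conf S) :=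
  {γ | ∃ (s : S) (c : ℕ), γ = some (s, c) ∧ (c : ℚ) ≤ t}

/-- `density(Γ̃, π_{[n,n']})`: the proportion of positions `n+1 ≤ i ≤ n'` whose
configuration belongs to `Γ̃`, among the `n' − n` positions of the infix `π_{[n,n']}`
(the initial configuration of the infix is not counted). -/
noncomputable def densityIn {S : Type*} (Γt : Set (Conf S)) (s0 : Conf S)
    (π : ℕ → WEdge (Conf S)) (n n' : ℕ) : ℚ :=
  ({i | n + 1 ≤ i ∧ i ≤ n' ∧ StAt s0 π i ∈ Γt}.ncard : ℚ) / ((n' - n : ℕ) : ℚ)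

/-- For every play `π` of the expanded game `G'` from `(s_init, 0)` with
`MPsup(π) ≤ t`, there exists a configuration `γ ∈ Γ^{≤t}` such that for every `n` there
are infinitely many `n' ≥ n` with `density({γ}, π_{[n,n']}) ≥ t̃ / (4(t+1)²|S|)`,
where `t̃ = ⌊t⌋ + 1 − t`. -/
theorem statement3 {S : Type} [Fintype S] (G : Game S) (sinit : S) (t : ℚ) (ht : 0 ≤ t)
    (π : ℕ → WEdge (Conf S))
    (hplay : IsPlay (ExpE G t) (some (sinit, 0)) π)
    (hmp : LimsupLE (MP π) t) :
    ∃ γ ∈ ConfLE (S := S) t, ∀ n : ℕ,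
      {n' | n ≤ n' ∧
        ((⌊t⌋ : ℚ) + 1 - t) / (4 * (t + 1) ^ 2 * (Fintype.card S : ℚ)) ≤
          densityIn {γ} (some (sinit, 0)) π n n'}.Infinite := by
  classical
  have hne : Nonempty S := ⟨sinit⟩
  obtain ⟨hE, hinit, hchain⟩ := hplay
  by_contra hcon
  push_neg at hcon
  set s0 : Conf S := some (sinit, 0) with hs0
  set tl : ℚ := (⌊t⌋ : ℚ) + 1 - t with htl
  set D : ℚ := tl / (4 * (t + 1) ^ 2 * (Fintype.card S : ℚ)) with hD
  have hfl : (⌊t⌋ : ℚ) ≤ t := Int.floor_le t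
  have hfl' : t < (⌊t⌋ : ℚ) + 1 := Int.lt_floor_add_one t
  have htlpos : 0 < tl := by rw [htl]; linarith
  have htl1 : tl ≤ 1 := by rw [htl]; linarith
  have ht1 : (0:ℚ) < t + 1 := by linarith
  have hcardpos : (0:ℚ) < (Fintype.card S : ℚ) := by
    exact_mod_cast Fintype.card_pos
  have hDpos : 0 < D := by
    rw [hD]; apply div_pos htlpos; positivity
  set m : ℕ := ⌊t⌋.toNat with hmdef
  have hm : (m : ℤ) = ⌊t⌋ := Int.toNat_of_nonneg (Int.floor_nonneg.mpr ht)
  -- the finite set of low configurations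
  set Low : Finset (Conf S) :=
    (Finset.univ : Finset (S × Fin (m+1))).image
      (fun p => (some (p.1, (p.2 : ℕ)) : Conf S)) with hLowdef
  have hLowMem : ∀ (s : S) (c : ℕ), (some (s, c) : Conf S) ∈ Low ↔ c ≤ m := by
    intro s c
    constructor
    · intro h
      rw [hLowdef, Finset.mem_image] at h
      obtain ⟨⟨a, b⟩, -, hab⟩ := h
      have h1 : a = s ∧ (b : ℕ) = c := by
        simpa using hab
      have := b.isLt
      omega
    · intro h
      rw [hLowdef, Finset.mem_image]
      exact ⟨(s, ⟨c, by omega⟩), Finset.mem_univ _, rfl⟩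
  have hLowCard : (Low.card : ℚ) ≤ (Fintype.card S : ℚ) * (t + 1) := by
    have h1 : Low.card ≤ Fintype.card (S × Fin (m+1)) := by
      rw [hLowdef]
      exact le_trans (Finset.card_image_le) (by rw [Finset.card_univ])
    have h2 : Fintype.card (S × Fin (m+1)) = Fintype.card S * (m+1) := by
      simp [Fintype.card_prod]
    have h3 : ((m:ℚ) + 1) ≤ t + 1 := by
      have : (m : ℚ) ≤ t := by
        have : ((m:ℤ) : ℚ) ≤ t := by rw [hm]; exact hfl
        exact_mod_cast this
      linarith
    have h4 : (Low.card : ℚ) ≤ (Fintype.card S : ℚ) * ((m:ℚ)+1) := by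
      have := h2 ▸ h1
      exact_mod_cast this
    nlinarith [hcardpos]
  -- basic play facts
  have hsrc : ∀ i, (π i).1 = StAt s0 π i := by
    intro i
    cases i with
    | zero => simpa [StAt] using hinit
    | succ i => rw [StAt]; exact (hchain i).symm
  have hWnn : ∀ i, (0:ℤ) ≤ (π i).2.1 := by
    intro i
    have hc0 : (0:ℤ) ≤ ⌈t⌉ := Int.ceil_nonneg ht
    rcases hE i with ⟨s, c, w, s', c', -, -, he⟩ | ⟨s, c, w, s', -, -, he⟩ | he
    · rw [he]; exact Int.natCast_nonneg c'
    · rw [he]; show (0:ℤ) ≤ ⌈t⌉ + 1; linarith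
    · rw [he]; show (0:ℤ) ≤ ⌈t⌉ + 1; linarith
  have hlowconf : ∀ i, (π i).2.1 ≤ ⌊t⌋ →
      ∃ (s' : S) (c' : ℕ), StAt s0 π (i+1) = some (s', c') ∧ (c' : ℤ) ≤ ⌊t⌋ := by
    intro i hi
    have hfc : (⌊t⌋ : ℤ) < ⌈t⌉ + 1 := lt_of_le_of_lt (Int.floor_le_ceil t) (lt_add_one _)
    rcases hE i with ⟨s, c, w, s', c', -, -, he⟩ | ⟨s, c, w, s', -, -, he⟩ | he
    · refine ⟨s', c', ?_, ?_⟩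
      · show (π i).2.2 = _
        rw [he]
      · have hw : (π i).2.1 = (c' : ℤ) := by rw [he]
        rw [hw] at hi; exact hi
    · exfalso
      have hw : (π i).2.1 = ⌈t⌉ + 1 := by rw [he]
      rw [hw] at hi; omega
    · exfalso
      have hw : (π i).2.1 = ⌈t⌉ + 1 := by rw [he]
      rw [hw] at hi; omega
  -- energy lower bound in terms of number of low-weight steps
  have hELlb : ∀ n : ℕ,
      ((n - ((Finset.range n).filter (fun i => (π i).2.1 ≤ ⌊t⌋)).card : ℕ) : ℤ) * (⌊t⌋ + 1)
        ≤ EL π n := by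
    intro n
    set K := (Finset.range n).filter (fun i => (π i).2.1 ≤ ⌊t⌋) with hK
    set Kc := (Finset.range n).filter (fun i => ¬ (π i).2.1 ≤ ⌊t⌋) with hKc
    have hcards : K.card + Kc.card = n := by
      rw [hK, hKc]
      rw [Finset.card_filter_add_card_filter_not]
      exact Finset.card_range n
    have h1 : ∀ i ∈ Kc, (⌊t⌋ + 1 : ℤ) ≤ (π i).2.1 := by
      intro i hi
      have := (Finset.mem_filter.mp hi).2
      omega
    have hKKc : n - K.card = Kc.card := by omega
    calc ((n - K.card : ℕ) : ℤ) * (⌊t⌋ + 1) = (Kc.card : ℤ) * (⌊t⌋ + 1) := by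
          rw [hKKc]
      _ = ∑ _i ∈ Kc, (⌊t⌋ + 1 : ℤ) := by
          rw [Finset.sum_const, nsmul_eq_mul]
      _ ≤ ∑ i ∈ Kc, (π i).2.1 := Finset.sum_le_sum h1
      _ ≤ ∑ i ∈ Finset.range n, (π i).2.1 :=
          Finset.sum_le_sum_of_subset_of_nonneg (Finset.filter_subset _ _)
            (fun i _ _ => hWnn i)
      _ = EL π n := rfl
  -- many low-weight steps eventually
  obtain ⟨N₀, hN₀⟩ := hmp (tl/2) (by linarith)
  have hKlb : ∀ n, max N₀ 1 ≤ n →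
      tl / (2*(t+1)) * n ≤ (((Finset.range n).filter (fun i => (π i).2.1 ≤ ⌊t⌋)).card : ℚ) := by
    intro n hn
    have hn1 : 1 ≤ n := le_of_max_le_right hn
    have hnq : (0:ℚ) < n := by exact_mod_cast hn1
    have hmpn : MP π n ≤ t + tl/2 := hN₀ n (le_of_max_le_left hn)
    have hEL : (EL π n : ℚ) ≤ (t + tl/2) * n := by
      have h0 : (EL π n : ℚ) / n ≤ t + tl/2 := hmpn
      calc (EL π n : ℚ) = (EL π n : ℚ) / n * n := by field_simp
        _ ≤ (t + tl/2) * n := mul_le_mul_of_nonneg_right h0 hnq.le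
    set k := ((Finset.range n).filter (fun i => (π i).2.1 ≤ ⌊t⌋)).card with hk
    have hkn : k ≤ n := le_trans (Finset.card_filter_le _ _) (le_of_eq (Finset.card_range n))
    have h2 : ((n - k : ℕ) : ℚ) * ((⌊t⌋:ℚ) + 1) ≤ (EL π n : ℚ) := by
      have := hELlb n
      rw [← hk] at this
      exact_mod_cast this
    have h3 : ((n - k : ℕ) : ℚ) = (n:ℚ) - (k:ℚ) := by
      exact Nat.cast_sub hkn
    have hk0 : (0:ℚ) ≤ (k:ℚ) := Nat.cast_nonneg k
    have hfl2 : (⌊t⌋:ℚ) + 1 = t + tl := by rw [htl]; ring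
    rw [h3, hfl2] at h2
    -- (n - k)(t + tl) ≤ (t + tl/2) n  ⇒  tl/2 * n ≤ k (t + tl) ≤ k (t+1)
    have h4 : tl/2 * n ≤ (k:ℚ) * (t + 1) := by nlinarith
    rw [div_mul_eq_mul_div, div_le_iff₀ (by linarith : (0:ℚ) < 2*(t+1))]
    nlinarith
  -- low-weight steps yield visits to Low configurations
  have hinj : ∀ n : ℕ,
      ((Finset.range n).filter (fun i => (π i).2.1 ≤ ⌊t⌋)).card ≤
      ((Finset.Icc 1 n).filter (fun j => StAt s0 π j ∈ Low)).card := by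
    intro n
    apply Finset.card_le_card_of_injOn (fun i => i + 1)
    · intro i hi
      obtain ⟨hir, hil⟩ := Finset.mem_filter.mp hi
      rw [Finset.mem_range] at hir
      obtain ⟨s', c', hst, hc⟩ := hlowconf i hil
      show i + 1 ∈ _
      refine Finset.mem_filter.mpr ⟨Finset.mem_Icc.mpr ⟨by omega, by omega⟩, ?_⟩
      rw [hst, hLowMem]
      omega
    · intro a _ b _ h
      have h' : a + 1 = b + 1 := h
      omega
  -- density rewriting
  have hdens : ∀ (γ : Conf S) (n n' : ℕ), densityIn {γ} s0 π n n' =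
      (((Finset.Icc (n+1) n').filter (fun j => StAt s0 π j = γ)).card : ℚ)
        / ((n' - n : ℕ) : ℚ) := by
    intro γ n n'
    unfold densityIn
    congr 2
    rw [← Set.ncard_coe_finset]
    congr 1
    ext i
    simp [Finset.mem_Icc, and_assoc]
  -- Low configurations are in ConfLE t
  have hLowConfLE : ∀ γ ∈ Low, γ ∈ ConfLE (S := S) t := by
    intro γ hγ
    rw [hLowdef, Finset.mem_image] at hγ
    obtain ⟨⟨a, b⟩, -, hab⟩ := hγ
    refine ⟨a, (b : ℕ), hab.symm, ?_⟩
    have hb : ((b:ℕ) : ℤ) ≤ ⌊t⌋ := by have := b.isLt; omega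
    have : ((b:ℕ) : ℚ) ≤ (⌊t⌋ : ℚ) := by exact_mod_cast hb
    linarith
  -- per-configuration eventual count bound
  have hA : ∀ γ : Conf S, ∃ (mγ B : ℕ), γ ∈ Low → ∀ n' : ℕ, B ≤ n' →
      (((Finset.Icc 1 n').filter (fun j => StAt s0 π j = γ)).card : ℚ) ≤ D * n' + mγ := by
    intro γ
    by_cases hγ : γ ∈ Low
    · obtain ⟨nγ, hfin⟩ := hcon γ (hLowConfLE γ hγ)
      obtain ⟨B, hB⟩ := hfin.bddAbove
      refine ⟨nγ, max (B+1) (nγ+1), fun _ n' hn' => ?_⟩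
      have h1 : nγ + 1 ≤ n' := le_trans (le_max_right _ _) hn'
      have h2 : B + 1 ≤ n' := le_trans (le_max_left _ _) hn'
      have hnot : ¬ (nγ ≤ n' ∧ D ≤ densityIn {γ} s0 π nγ n') := by
        intro hmem
        have : n' ≤ B := hB hmem
        omega
      have hdlt : densityIn {γ} s0 π nγ n' < D := by
        rcases not_and_or.mp hnot with h | h
        · omega
        · exact lt_of_not_ge h
      rw [hdens] at hdlt
      have hposn : (0:ℚ) < ((n' - nγ : ℕ) : ℚ) := by
        have : 0 < n' - nγ := by omega
        exact_mod_cast this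
      have hcnt : (((Finset.Icc (nγ+1) n').filter (fun j => StAt s0 π j = γ)).card : ℚ)
          < D * ((n' - nγ : ℕ) : ℚ) := (div_lt_iff₀ hposn).mp hdlt
      have hsplit : ((Finset.Icc 1 n').filter (fun j => StAt s0 π j = γ)).card ≤
          ((Finset.Icc (nγ+1) n').filter (fun j => StAt s0 π j = γ)).card + nγ := by
        have hsub : Finset.Icc 1 n' ⊆ Finset.Icc (nγ+1) n' ∪ Finset.Icc 1 nγ := by
          intro j hj
          simp only [Finset.mem_Icc, Finset.mem_union] at *
          omega
        calc ((Finset.Icc 1 n').filter (fun j => StAt s0 π j = γ)).card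
            ≤ ((Finset.Icc (nγ+1) n' ∪ Finset.Icc 1 nγ).filter
                (fun j => StAt s0 π j = γ)).card :=
              Finset.card_le_card (Finset.filter_subset_filter _ hsub)
          _ ≤ ((Finset.Icc (nγ+1) n').filter (fun j => StAt s0 π j = γ)).card +
              ((Finset.Icc 1 nγ).filter (fun j => StAt s0 π j = γ)).card := by
              rw [Finset.filter_union]
              exact Finset.card_union_le _ _
          _ ≤ ((Finset.Icc (nγ+1) n').filter (fun j => StAt s0 π j = γ)).card + nγ := by
              have := Finset.card_filter_le (Finset.Icc 1 nγ) (fun j => StAt s0 π j = γ)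
              have hIcc : (Finset.Icc 1 nγ).card = nγ := by
                rw [Nat.card_Icc]; omega
              omega
      have hsub2 : ((n' - nγ : ℕ) : ℚ) ≤ (n' : ℚ) := by
        exact_mod_cast Nat.sub_le n' nγ
      have hsplitQ : (((Finset.Icc 1 n').filter (fun j => StAt s0 π j = γ)).card : ℚ)
          ≤ (((Finset.Icc (nγ+1) n').filter (fun j => StAt s0 π j = γ)).card : ℚ) + nγ := by
        exact_mod_cast hsplit
      have hDn : D * ((n' - nγ : ℕ) : ℚ) ≤ D * n' :=
        mul_le_mul_of_nonneg_left hsub2 hDpos.le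
      linarith
    · exact ⟨0, 0, fun h => absurd h hγ⟩
  choose mf Bf hf using hA
  -- final contradiction at a large n'
  set Csum : ℕ := ∑ γ ∈ Low, mf γ with hCsum
  set T : ℕ := max (max N₀ 1) (Low.sup Bf) with hT
  obtain ⟨M, hM⟩ := exists_nat_gt ((Csum : ℚ) * (4*(t+1)) / tl)
  set n' : ℕ := max T M with hn'def
  have hn'T : T ≤ n' := le_max_left _ _
  have hn'M : M ≤ n' := le_max_right _ _
  -- lower bound on low visits
  have hlb : tl / (2*(t+1)) * n' ≤
      (((Finset.Icc 1 n').filter (fun j => StAt s0 π j ∈ Low)).card : ℚ) := by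
    have h1 := hKlb n' (le_trans (le_max_left _ _) hn'T)
    have h2 := hinj n'
    have h2Q : (((Finset.range n').filter (fun i => (π i).2.1 ≤ ⌊t⌋)).card : ℚ) ≤
        (((Finset.Icc 1 n').filter (fun j => StAt s0 π j ∈ Low)).card : ℚ) := by
      exact_mod_cast h2
    linarith
  -- upper bound via fiberwise decomposition
  have hfib : ((Finset.Icc 1 n').filter (fun j => StAt s0 π j ∈ Low)).card =
      ∑ γ ∈ Low, (((Finset.Icc 1 n').filter (fun j => StAt s0 π j ∈ Low)).filter
        (fun j => StAt s0 π j = γ)).card :=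
    Finset.card_eq_sum_card_fiberwise (fun x hx => (Finset.mem_filter.mp hx).2)
  have hub : (((Finset.Icc 1 n').filter (fun j => StAt s0 π j ∈ Low)).card : ℚ) ≤
      (Low.card : ℚ) * (D * n') + Csum := by
    have h1 : ∀ γ ∈ Low,
        ((((Finset.Icc 1 n').filter (fun j => StAt s0 π j ∈ Low)).filter
          (fun j => StAt s0 π j = γ)).card : ℚ) ≤ D * n' + mf γ := by
      intro γ hγ
      have hBγ : Bf γ ≤ n' := le_trans (le_trans (Finset.le_sup hγ) (le_max_right _ _)) hn'T
      have h2 := hf γ hγ n' hBγ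
      have h3 : (((Finset.Icc 1 n').filter (fun j => StAt s0 π j ∈ Low)).filter
          (fun j => StAt s0 π j = γ)).card ≤
          ((Finset.Icc 1 n').filter (fun j => StAt s0 π j = γ)).card :=
        Finset.card_le_card (Finset.filter_subset_filter _ (Finset.filter_subset _ _))
      have h3Q : ((((Finset.Icc 1 n').filter (fun j => StAt s0 π j ∈ Low)).filter
          (fun j => StAt s0 π j = γ)).card : ℚ) ≤
          (((Finset.Icc 1 n').filter (fun j => StAt s0 π j = γ)).card : ℚ) := by
        exact_mod_cast h3
      linarith
    calc (((Finset.Icc 1 n').filter (fun j => StAt s0 π j ∈ Low)).card : ℚ)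
        = ∑ γ ∈ Low, ((((Finset.Icc 1 n').filter (fun j => StAt s0 π j ∈ Low)).filter
            (fun j => StAt s0 π j = γ)).card : ℚ) := by
          rw [hfib]; push_cast; ring
      _ ≤ ∑ γ ∈ Low, (D * n' + (mf γ : ℚ)) := Finset.sum_le_sum h1
      _ = (Low.card : ℚ) * (D * n') + Csum := by
          rw [Finset.sum_add_distrib, Finset.sum_const, nsmul_eq_mul, hCsum]
          push_cast
          ring
  -- combine
  have hcoef : (Low.card : ℚ) * D ≤ tl / (4*(t+1)) := by
    have hDeq : (Fintype.card S : ℚ) * (t+1) * D = tl / (4*(t+1)) := by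
      rw [hD]
      field_simp
    have := mul_le_mul_of_nonneg_right hLowCard hDpos.le
    linarith [this, hDeq]
  have hn'q : (0:ℚ) ≤ (n' : ℚ) := Nat.cast_nonneg n'
  have hkey : tl / (4*(t+1)) * n' ≤ (Csum : ℚ) := by
    have h1 : (Low.card : ℚ) * (D * n') ≤ tl / (4*(t+1)) * n' := by
      have h0 := mul_le_mul_of_nonneg_right hcoef hn'q
      have ha := mul_assoc (Low.card : ℚ) D (n' : ℚ)
      linarith
    have h2 : tl / (2*(t+1)) * n' ≤ tl / (4*(t+1)) * n' + Csum := by linarith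
    have h3 : tl / (2*(t+1)) = tl / (4*(t+1)) + tl / (4*(t+1)) := by
      rw [← add_div, ← two_mul]
      rw [div_eq_div_iff (by linarith) (by linarith)]
      ring
    rw [h3] at h2
    linarith
  -- but n' is large enough to contradict this
  have hlarge : (Csum : ℚ) * (4*(t+1)) / tl < (n' : ℚ) := by
    have : (M : ℚ) ≤ (n' : ℚ) := by exact_mod_cast hn'M
    linarith
  have hlarge2 : (Csum : ℚ) * (4*(t+1)) < (n' : ℚ) * tl := by
    exact (div_lt_iff₀ htlpos).mp hlarge
  have h4pos : (0:ℚ) < 4*(t+1) := by linarith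
  rw [div_mul_eq_mul_div, div_le_iff₀ h4pos] at hkey
  have hcomm : tl * (n' : ℚ) = (n' : ℚ) * tl := mul_comm _ _
  linarith

end AvgEnergy
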